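/- arXiv:2508.00623 — 3 statements merged into one kernel-verified Lean document; each statement's English description precedes it below -/
import Mathlib

section
/- Let Ω ⊆ ℂ be a connected open set and let h₁, h₂ : Ω → ℂ be analytic functions satisfying |h₂(z)|² = 1 + |h₁(z)|² for all z ∈ Ω. Then h₁ and h₂ are both constant. -/
open Complex

/-- A holomorphic function with constant modulus on a connected open set is constant. -/
lemma aux_const_of_const_abs {Ω : Set ℂ} (hΩo : IsOpen Ω) (hΩc : IsPreconnected Ω)
    {f : ℂ → ℂ} (hf : DifferentiableOn ℂ f Ω) {z₀ : ℂ} (hz₀ : z₀ ∈ Ω)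
    (h : ∀ z ∈ Ω, ‖f z‖ = ‖f z₀‖) :
    ∀ z ∈ Ω, f z = f z₀ := by
  intro z hz
  have hmax : IsMaxOn (norm ∘ f) Ω z₀ := by
    intro w hw
    simp only [Function.comp_apply]
    exact le_of_eq (h w hw)
  exact Complex.eqOn_of_isPreconnected_of_isMaxOn_norm hΩc hΩo hf hz₀ hmax hz

/-- If `h₁, h₂` are holomorphic on a connected open set `Ω` and
`|h₂ z|² = 1 + |h₁ z|²` on `Ω`, then `h₁` and `h₂` are both constant. -/
theorem holomorphic_pair_modulus_relation_const {Ω : Set ℂ} (hΩo : IsOpen Ω)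
    (hΩc : IsConnected Ω) (h₁ h₂ : ℂ → ℂ)
    (hh₁ : DifferentiableOn ℂ h₁ Ω) (hh₂ : DifferentiableOn ℂ h₂ Ω)
    (hrel : ∀ z ∈ Ω, ‖h₂ z‖ ^ 2 = 1 + ‖h₁ z‖ ^ 2) :
    (∃ a : ℂ, ∀ z ∈ Ω, h₁ z = a) ∧ (∃ b : ℂ, ∀ z ∈ Ω, h₂ z = b) := by
  obtain ⟨z₀, hz₀⟩ := hΩc.nonempty
  set u : ℂ → ℂ := fun z => h₂ z * (starRingEnd ℂ) (h₂ z₀) - h₁ z * (starRingEnd ℂ) (h₁ z₀)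
    with hu_def
  -- key inequality: 1 + x*y ≤ X*Y where X² = 1+x², Y² = 1+y²
  have key : ∀ z ∈ Ω, 1 + ‖h₁ z‖ * ‖h₁ z₀‖ ≤
      ‖h₂ z‖ * ‖h₂ z₀‖ := by
    intro z hz
    have hx := norm_nonneg (h₁ z)
    have hy := norm_nonneg (h₁ z₀)
    have hX := norm_nonneg (h₂ z)
    have hY := norm_nonneg (h₂ z₀)
    have e1 := hrel z hz
    have e2 := hrel z₀ hz₀
    nlinarith [sq_nonneg (‖h₁ z‖ - ‖h₁ z₀‖),
      mul_nonneg hX hY, mul_nonneg hx hy,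
      sq_nonneg (‖h₂ z‖ * ‖h₂ z₀‖ + 1 +
        ‖h₁ z‖ * ‖h₁ z₀‖)]
  have hu_lb : ∀ z ∈ Ω, 1 ≤ ‖u z‖ := by
    intro z hz
    have h1 : ‖h₂ z * (starRingEnd ℂ) (h₂ z₀)‖ -
        ‖h₁ z * (starRingEnd ℂ) (h₁ z₀)‖ ≤ ‖u z‖ := by
      simpa [hu_def] using norm_sub_norm_le
        (h₂ z * (starRingEnd ℂ) (h₂ z₀)) (h₁ z * (starRingEnd ℂ) (h₁ z₀))
    have h2 := key z hz
    simp only [norm_mul, Complex.norm_conj] at h1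
    linarith
  have hu_ne : ∀ z ∈ Ω, u z ≠ 0 := by
    intro z hz h0
    have := hu_lb z hz
    rw [h0] at this
    simp only [norm_zero] at this
    linarith
  have hu_diff : DifferentiableOn ℂ u Ω :=
    (hh₂.mul_const _).sub (hh₁.mul_const _)
  have hu_z₀ : u z₀ = 1 := by
    have hr := hrel z₀ hz₀
    have hval : ‖h₂ z₀‖ ^ 2 - ‖h₁ z₀‖ ^ 2 = 1 := by linarith
    simp only [hu_def, Complex.mul_conj, Complex.normSq_eq_norm_sq]
    rw [← Complex.ofReal_sub, hval,
      Complex.ofReal_one]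
  -- 1/u attains max modulus at z₀
  have huinv_diff : DifferentiableOn ℂ (fun z => (u z)⁻¹) Ω := hu_diff.inv hu_ne
  have hmax : IsMaxOn (norm ∘ fun z => (u z)⁻¹) Ω z₀ := by
    intro w hw
    simp only [Function.comp_apply, norm_inv, hu_z₀, norm_one, inv_one]
    exact inv_le_one_of_one_le₀ (hu_lb w hw)
  have huinv_const := Complex.eqOn_of_isPreconnected_of_isMaxOn_norm hΩc.isPreconnected hΩo
    huinv_diff hz₀ hmax
  have hu_one : ∀ z ∈ Ω, u z = 1 := by
    intro z hz
    have h1 : (u z)⁻¹ = (u z₀)⁻¹ := huinv_const hz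
    rw [hu_z₀, inv_one] at h1
    rw [← inv_inv (u z), h1, inv_one]
  -- |h₁| is constant on Ω
  have habs1 : ∀ z ∈ Ω, ‖h₁ z‖ = ‖h₁ z₀‖ := by
    intro z hz
    have h1 : ‖u z‖ = 1 := by rw [hu_one z hz]; simp
    have h2 := key z hz
    have h3 : ‖h₂ z‖ * ‖h₂ z₀‖ -
        ‖h₁ z‖ * ‖h₁ z₀‖ ≤ 1 := by
      have hle : ‖h₂ z * (starRingEnd ℂ) (h₂ z₀)‖ -
          ‖h₁ z * (starRingEnd ℂ) (h₁ z₀)‖ ≤ ‖u z‖ := by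
        simpa [hu_def] using norm_sub_norm_le
          (h₂ z * (starRingEnd ℂ) (h₂ z₀)) (h₁ z * (starRingEnd ℂ) (h₁ z₀))
      simp only [norm_mul, Complex.norm_conj] at hle
      linarith [hle, h1.le]
    -- now X*Y = 1 + x*y exactly, deduce x = y
    have heq : ‖h₂ z‖ * ‖h₂ z₀‖ =
        1 + ‖h₁ z‖ * ‖h₁ z₀‖ := le_antisymm (by linarith) h2
    have e1 := hrel z hz
    have e2 := hrel z₀ hz₀
    have hx := norm_nonneg (h₁ z)
    have hy := norm_nonneg (h₁ z₀)
    nlinarith [sq_nonneg (‖h₁ z‖ - ‖h₁ z₀‖),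
      sq_nonneg (‖h₁ z‖ + ‖h₁ z₀‖)]
  have hc1 := aux_const_of_const_abs hΩo hΩc.isPreconnected hh₁ hz₀ habs1
  have habs2 : ∀ z ∈ Ω, ‖h₂ z‖ = ‖h₂ z₀‖ := by
    intro z hz
    have e1 := hrel z hz
    have e2 := hrel z₀ hz₀
    have h := habs1 z hz
    have hsq : ‖h₂ z‖ ^ 2 = ‖h₂ z₀‖ ^ 2 := by rw [e1, e2, h]
    rw [← Real.sqrt_sq (norm_nonneg (h₂ z)),
      ← Real.sqrt_sq (norm_nonneg (h₂ z₀)), hsq]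
  have hc2 := aux_const_of_const_abs hΩo hΩc.isPreconnected hh₂ hz₀ habs2
  exact ⟨⟨h₁ z₀, hc1⟩, ⟨h₂ z₀, hc2⟩⟩
end

section
/- Let Ω ⊆ ℂ be a connected open set, m₀ ∈ ℂ with |m₀| ≠ 1, and let w₁, w₃ : Ω → ℂ be analytic with 1 - |m₀|² + c|w₃(z)|² = |w₁(z)|² for all z ∈ Ω, where c > 0 is a real constant and w₁ is nonvanishing. Then w₃ is constant (and hence w₁ has constant modulus). -/
open Complex

private lemma path_hasDerivAt {f : ℂ → ℂ} {z f' : ℂ} (d : ℂ)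
    (hf : HasDerivAt f f' z) :
    HasDerivAt (fun t : ℝ => f (z + t • d)) (d * f') 0 := by
  have hpath : HasDerivAt (fun t : ℝ => z + t • d) d 0 := by
    simpa using ((hasDerivAt_id (0 : ℝ)).smul_const d).const_add z
  have h0 : z = z + (0 : ℝ) • d := by simp
  have := (hf.hasFDerivAt.restrictScalars ℝ).comp_hasDerivAt_of_eq (0 : ℝ) hpath h0
  simpa [smul_eq_mul, Function.comp_def] using this

private lemma pair_deriv_eq {Ω : Set ℂ} (hΩo : IsOpen Ω) {f p g q : ℂ → ℂ}
    (hf : DifferentiableOn ℂ f Ω) (hp : DifferentiableOn ℂ p Ω)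
    (hg : DifferentiableOn ℂ g Ω) (hq : DifferentiableOn ℂ q Ω)
    (c k : ℂ)
    (hconst : ∀ z ∈ Ω, f z * (starRingEnd ℂ) (p z) - c * (g z * (starRingEnd ℂ) (q z)) = k)
    {z : ℂ} (hz : z ∈ Ω) :
    deriv f z * (starRingEnd ℂ) (p z) = c * (deriv g z * (starRingEnd ℂ) (q z)) ∧
    f z * (starRingEnd ℂ) (deriv p z) = c * (g z * (starRingEnd ℂ) (deriv q z)) := by
  have hmem := hΩo.mem_nhds hz
  have dAt : ∀ {u : ℂ → ℂ}, DifferentiableOn ℂ u Ω → HasDerivAt u (deriv u z) z := fun hu =>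
    (hu.differentiableAt hmem).hasDerivAt
  have key : ∀ d : ℂ,
      (d * deriv f z) * (starRingEnd ℂ) (p z) + f z * (starRingEnd ℂ) (d * deriv p z)
        - c * ((d * deriv g z) * (starRingEnd ℂ) (q z)
            + g z * (starRingEnd ℂ) (d * deriv q z)) = 0 := by
    intro d
    have hγmem : ∀ᶠ t : ℝ in nhds 0, z + t • d ∈ Ω := by
      have hγc : ContinuousAt (fun t : ℝ => z + t • d) 0 := by fun_prop
      have h0 : z + (0 : ℝ) • d = z := by simp
      exact hγc.eventually_mem (by rw [h0]; exact hmem)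
    have Hf := path_hasDerivAt d (dAt hf)
    have Hp := (path_hasDerivAt d (dAt hp)).star
    have Hg := path_hasDerivAt d (dAt hg)
    have Hq := (path_hasDerivAt d (dAt hq)).star
    have Hprod := (Hf.mul Hp).sub ((Hg.mul Hq).const_mul c)
    have Hzero : HasDerivAt
        (fun t : ℝ => f (z + t • d) * star (p (z + t • d))
          - c * (g (z + t • d) * star (q (z + t • d)))) 0 0 := by
      refine (hasDerivAt_const (0 : ℝ) k).congr_of_eventuallyEq ?_
      filter_upwards [hγmem] with t ht
      simpa [Complex.star_def] using hconst _ ht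
    have := Hprod.unique Hzero
    simpa [Complex.star_def] using this
  have E1 := key 1
  have EI := key Complex.I
  simp only [one_mul, map_mul, Complex.conj_I] at E1 EI
  set A := deriv f z * (starRingEnd ℂ) (p z) with hA
  set B := f z * (starRingEnd ℂ) (deriv p z) with hB
  set C := deriv g z * (starRingEnd ℂ) (q z) with hC
  set D := g z * (starRingEnd ℂ) (deriv q z) with hD
  have e1 : A + B = c * (C + D) := by linear_combination E1
  have eI : Complex.I * (A - B) = Complex.I * (c * (C - D)) := by
    ring_nf
    ring_nf at EI
    linear_combination EI
  have e2 : A - B = c * (C - D) := mul_left_cancel₀ Complex.I_ne_zero eI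
  constructor
  · linear_combination (e1 + e2) / 2
  · linear_combination (e1 - e2) / 2

/-- If `w₁, w₃` are holomorphic on a connected open set `Ω`, `w₁` is nonvanishing,
`c > 0`, `|m₀| ≠ 1`, the quantity `1 - |m₀|² + c|w₃|²` is positive, and
`1 - |m₀|² + c|w₃ z|² = |w₁ z|²` on `Ω`, then `w₃` is constant (and hence `w₁`
has constant modulus). -/
theorem holomorphic_w3_const {Ω : Set ℂ} (hΩo : IsOpen Ω) (hΩc : IsConnected Ω)
    (w₁ w₃ : ℂ → ℂ) (hw₁ : DifferentiableOn ℂ w₁ Ω) (hw₃ : DifferentiableOn ℂ w₃ Ω)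
    (hne : ∀ z ∈ Ω, w₁ z ≠ 0) (m₀ : ℂ) (hm₀ : ‖m₀‖ ≠ 1)
    (c : ℝ) (hc : 0 < c)
    (hpos : ∀ z ∈ Ω, 0 < 1 - ‖m₀‖ ^ 2 + c * ‖w₃ z‖ ^ 2)
    (heq : ∀ z ∈ Ω,
      1 - ‖m₀‖ ^ 2 + c * ‖w₃ z‖ ^ 2 = ‖w₁ z‖ ^ 2) :
    (∃ a : ℂ, ∀ z ∈ Ω, w₃ z = a) ∧ (∃ ρ : ℝ, ∀ z ∈ Ω, ‖w₁ z‖ = ρ) := by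
  -- Step 1: first Wirtinger-type identity
  have habs : ∀ z ∈ Ω, w₁ z * (starRingEnd ℂ) (w₁ z)
      - (c : ℂ) * (w₃ z * (starRingEnd ℂ) (w₃ z)) = ((1 - ‖m₀‖ ^ 2 : ℝ) : ℂ) := by
    intro z hz
    have h := heq z hz
    rw [Complex.mul_conj, Complex.mul_conj]
    rw [Complex.normSq_eq_norm_sq, Complex.normSq_eq_norm_sq]
    have hr : ‖w₁ z‖ ^ 2 - c * ‖w₃ z‖ ^ 2
        = 1 - ‖m₀‖ ^ 2 := by linarith
    push_cast [← hr]
    ring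
  have S1 : ∀ z ∈ Ω, deriv w₁ z * (starRingEnd ℂ) (w₁ z)
      = (c : ℂ) * (deriv w₃ z * (starRingEnd ℂ) (w₃ z)) := fun z hz =>
    (pair_deriv_eq hΩo hw₁ hw₁ hw₃ hw₃ _ _ habs hz).1
  -- Step 2: second identity, from differentiating S1
  have hw₁' : DifferentiableOn ℂ (deriv w₁) Ω :=
    ((hw₁.analyticOnNhd hΩo).deriv).differentiableOn
  have hw₃' : DifferentiableOn ℂ (deriv w₃) Ω :=
    ((hw₃.analyticOnNhd hΩo).deriv).differentiableOn
  have S1' : ∀ z ∈ Ω, deriv w₁ z * (starRingEnd ℂ) (w₁ z)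
      - (c : ℂ) * (deriv w₃ z * (starRingEnd ℂ) (w₃ z)) = 0 := fun z hz => by
    rw [S1 z hz]; ring
  have S2 : ∀ z ∈ Ω, deriv w₁ z * (starRingEnd ℂ) (deriv w₁ z)
      = (c : ℂ) * (deriv w₃ z * (starRingEnd ℂ) (deriv w₃ z)) := fun z hz =>
    (pair_deriv_eq hΩo hw₁' hw₁ hw₃' hw₃ _ _ S1' hz).2
  -- Step 3: deriv w₃ = 0 on Ω
  have hd0 : ∀ z ∈ Ω, deriv w₃ z = 0 := by
    intro z hz
    by_contra hne3
    set a1 := ‖deriv w₁ z‖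
    set a0 := ‖w₁ z‖
    set b1 := ‖deriv w₃ z‖
    set b0 := ‖w₃ z‖
    have hb1 : 0 < b1 := by simpa [b1] using (norm_pos_iff.mpr hne3)
    have ha0 : 0 < a0 := by simpa [a0] using (norm_pos_iff.mpr (hne z hz))
    have hs2 : a1 ^ 2 = c * b1 ^ 2 := by
      have := congrArg (‖·‖) (S2 z hz)
      simpa [norm_mul, Complex.norm_conj, Complex.norm_real, Real.norm_eq_abs, abs_of_pos hc, sq,
        mul_assoc, a1, b1] using this
    have hs1 : a1 * a0 = c * (b1 * b0) := by
      have := congrArg (‖·‖) (S1 z hz)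
      simpa [norm_mul, Complex.norm_conj, Complex.norm_real, Real.norm_eq_abs, abs_of_pos hc,
        mul_assoc, a1, a0, b1, b0] using this
    have h0 : a0 ^ 2 = c * b0 ^ 2 := by
      have hcb : c * b1 ^ 2 ≠ 0 := by positivity
      have hsq : (a1 * a0) ^ 2 = (c * (b1 * b0)) ^ 2 := by rw [hs1]
      refine mul_left_cancel₀ hcb ?_
      linear_combination hsq - a0 ^ 2 * hs2
    have hm : ‖m₀‖ ^ 2 = 1 := by
      have h := heq z hz
      linarith
    have : (‖m₀‖ - 1) * (‖m₀‖ + 1) = 0 := by linear_combination hm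
    rcases mul_eq_zero.1 this with h | h
    · exact hm₀ (by linarith)
    · have := norm_nonneg m₀; linarith
  -- Step 4: w₃ is constant on Ω
  obtain ⟨z₀, hz₀⟩ := hΩc.nonempty
  have hw₃const : ∀ z ∈ Ω, w₃ z = w₃ z₀ := by
    have hana : AnalyticOnNhd ℂ w₃ Ω := hw₃.analyticOnNhd hΩo
    have hanaC : AnalyticOnNhd ℂ (fun _ : ℂ => w₃ z₀) Ω := fun z _ => analyticAt_const
    obtain ⟨r, hr, hball⟩ := Metric.isOpen_iff.1 hΩo z₀ hz₀
    have hloc : Set.EqOn w₃ (fun _ => w₃ z₀) (Metric.ball z₀ r) := by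
      have hconv : Convex ℝ (Metric.ball z₀ r) := convex_ball z₀ r
      intro x hx
      refine hconv.is_const_of_fderivWithin_eq_zero (hw₃.mono hball) ?_ hx
        (Metric.mem_ball_self hr)
      intro y hy
      have hdy : DifferentiableAt ℂ w₃ y := hw₃.differentiableAt (hΩo.mem_nhds (hball hy))
      rw [fderivWithin_of_isOpen Metric.isOpen_ball hy]
      ext
      simp only [ContinuousLinearMap.zero_apply]
      have : fderiv ℂ w₃ y = ContinuousLinearMap.smulRight (1 : ℂ →L[ℂ] ℂ) (deriv w₃ y) := by
        ext; rw [ContinuousLinearMap.smulRight_apply, ContinuousLinearMap.one_apply, one_smul]; rfl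
      rw [this, hd0 y (hball hy)]
      simp
    intro z hz
    have hev : w₃ =ᶠ[nhds z₀] fun _ => w₃ z₀ :=
      Filter.eventuallyEq_of_mem (Metric.isOpen_ball.mem_nhds (Metric.mem_ball_self hr)) hloc
    exact hana.eqOn_of_preconnected_of_eventuallyEq hanaC hΩc.isPreconnected hz₀ hev hz
  refine ⟨⟨w₃ z₀, hw₃const⟩, ⟨Real.sqrt (1 - ‖m₀‖ ^ 2 + c * ‖w₃ z₀‖ ^ 2), ?_⟩⟩
  intro z hz
  have h := heq z hz
  rw [hw₃const z hz] at h
  rw [h, Real.sqrt_sq (norm_nonneg _)]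
end

section
/- Let Ω ⊆ ℂ be open and connected and q₁ : Ω → ℂ holomorphic with 0 < |q₁(z)| < 1. Suppose m₁, m₂ : Ω → ℂ are holomorphic, m₁ nonvanishing, and |m₁(z)|² − |m₂(z)|² = 1 − |q₁(z)|² on Ω. If q₁ is a nonzero constant c₀, then m₁ and m₂ are both constant. -/
open Complex

lemma key_deriv {Ω : Set ℂ} (hΩo : IsOpen Ω) (f₁ g₁ f₂ g₂ : ℂ → ℂ) (c : ℂ)
    (hf₁ : DifferentiableOn ℂ f₁ Ω) (hg₁ : DifferentiableOn ℂ g₁ Ω)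
    (hf₂ : DifferentiableOn ℂ f₂ Ω) (hg₂ : DifferentiableOn ℂ g₂ Ω)
    (h : ∀ w ∈ Ω, (starRingEnd ℂ) (f₁ w) * g₁ w - (starRingEnd ℂ) (f₂ w) * g₂ w = c)
    {z : ℂ} (hz : z ∈ Ω) :
    (starRingEnd ℂ) (f₁ z) * deriv g₁ z - (starRingEnd ℂ) (f₂ z) * deriv g₂ z = 0 ∧
    g₁ z * (starRingEnd ℂ) (deriv f₁ z) - g₂ z * (starRingEnd ℂ) (deriv f₂ z) = 0 := by
  have hnhds : Ω ∈ nhds z := hΩo.mem_nhds hz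
  have df₁ : DifferentiableAt ℂ f₁ z := (hf₁ z hz).differentiableAt hnhds
  have dg₁ : DifferentiableAt ℂ g₁ z := (hg₁ z hz).differentiableAt hnhds
  have df₂ : DifferentiableAt ℂ f₂ z := (hf₂ z hz).differentiableAt hnhds
  have dg₂ : DifferentiableAt ℂ g₂ z := (hg₂ z hz).differentiableAt hnhds
  set L : ℂ →L[ℝ] ℂ := Complex.conjCLE.toContinuousLinearMap with hL
  have Hcf₁ : HasFDerivAt (fun w => (starRingEnd ℂ) (f₁ w))
      (L.comp ((ContinuousLinearMap.smulRight (1 : ℂ →L[ℂ] ℂ) (deriv f₁ z)).restrictScalars ℝ)) z := by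
    have := L.hasFDerivAt.comp z ((df₁.hasDerivAt.hasFDerivAt).restrictScalars ℝ)
    exact this
  have Hcf₂ : HasFDerivAt (fun w => (starRingEnd ℂ) (f₂ w))
      (L.comp ((ContinuousLinearMap.smulRight (1 : ℂ →L[ℂ] ℂ) (deriv f₂ z)).restrictScalars ℝ)) z := by
    have := L.hasFDerivAt.comp z ((df₂.hasDerivAt.hasFDerivAt).restrictScalars ℝ)
    exact this
  have Hg₁ : HasFDerivAt g₁ ((ContinuousLinearMap.smulRight (1 : ℂ →L[ℂ] ℂ) (deriv g₁ z)).restrictScalars ℝ) z :=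
    (dg₁.hasDerivAt.hasFDerivAt).restrictScalars ℝ
  have Hg₂ : HasFDerivAt g₂ ((ContinuousLinearMap.smulRight (1 : ℂ →L[ℂ] ℂ) (deriv g₂ z)).restrictScalars ℝ) z :=
    (dg₂.hasDerivAt.hasFDerivAt).restrictScalars ℝ
  have Hφ := (Hcf₁.mul Hg₁).sub (Hcf₂.mul Hg₂)
  have h0 : HasFDerivAt (fun w => (starRingEnd ℂ) (f₁ w) * g₁ w - (starRingEnd ℂ) (f₂ w) * g₂ w)
      (0 : ℂ →L[ℝ] ℂ) z := by
    refine (hasFDerivAt_const c z).congr_of_eventuallyEq ?_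
    filter_upwards [hnhds] with w hw using h w hw
  have huniq := h0.unique Hφ
  have e1 := DFunLike.congr_fun huniq (1 : ℂ)
  have eI := DFunLike.congr_fun huniq Complex.I
  simp only [ContinuousLinearMap.zero_apply, ContinuousLinearMap.add_apply,
    ContinuousLinearMap.sub_apply, ContinuousLinearMap.smul_apply,
    ContinuousLinearMap.coe_smul', Pi.smul_apply, ContinuousLinearMap.comp_apply,
    ContinuousLinearMap.coe_restrictScalars', ContinuousLinearMap.smulRight_apply,
    ContinuousLinearMap.one_apply, hL, ContinuousLinearEquiv.coe_coe, Complex.conjCLE_apply,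
    smul_eq_mul, one_mul, mul_one, map_mul, Complex.conj_I] at e1 eI
  set B : ℂ := (starRingEnd ℂ) (f₁ z) * deriv g₁ z - (starRingEnd ℂ) (f₂ z) * deriv g₂ z with hB
  set A : ℂ := g₁ z * (starRingEnd ℂ) (deriv f₁ z) - g₂ z * (starRingEnd ℂ) (deriv f₂ z) with hA
  constructor
  · linear_combination (-1/2 : ℂ) * e1 + Complex.I/2 * eI + (B - A)/2 * Complex.I_sq
  · linear_combination (-1/2 : ℂ) * e1 - Complex.I/2 * eI + (A - B)/2 * Complex.I_sq


lemma const_of_deriv_eq_zero {Ω : Set ℂ} (hΩo : IsOpen Ω) (hΩc : IsConnected Ω)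
    (f : ℂ → ℂ) (hf : DifferentiableOn ℂ f Ω) (hd : ∀ z ∈ Ω, deriv f z = 0) :
    ∃ a : ℂ, ∀ z ∈ Ω, f z = a := by
  obtain ⟨z₀, hz₀⟩ := hΩc.nonempty
  refine ⟨f z₀, fun z hz => ?_⟩
  obtain ⟨r, hr, hball⟩ := Metric.isOpen_iff.mp hΩo z₀ hz₀
  have hfz : ∀ x ∈ Metric.ball z₀ r, fderivWithin ℂ f (Metric.ball z₀ r) x = 0 := by
    intro x hx
    rw [fderivWithin_of_isOpen Metric.isOpen_ball hx]
    have hdx : DifferentiableAt ℂ f x :=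
      (hf x (hball hx)).differentiableAt (hΩo.mem_nhds (hball hx))
    have h0 : HasDerivAt f 0 x := hd x (hball hx) ▸ hdx.hasDerivAt
    have h0' : HasFDerivAt f (0 : ℂ →L[ℂ] ℂ) x := by
      convert h0.hasFDerivAt using 1
      ext w
      simp
      ext w
      simp
    exact h0'.fderiv
  have hconst : ∀ y ∈ Metric.ball z₀ r, f y = f z₀ :=
    fun y hy => (convex_ball z₀ r).is_const_of_fderivWithin_eq_zero (hf.mono hball) hfz hy
      (Metric.mem_ball_self hr)
  have hev : f =ᶠ[nhds z₀] (fun _ => f z₀) := by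
    filter_upwards [Metric.isOpen_ball.mem_nhds (Metric.mem_ball_self hr)] with y hy
      using hconst y hy
  exact (hf.analyticOnNhd hΩo).eqOn_of_preconnected_of_eventuallyEq
    (analyticOnNhd_const) hΩc.isPreconnected hz₀ hev hz

/-- If `q₁` is the nonzero constant `c₀` on the connected open set `Ω`, `m₁, m₂`
are holomorphic with `m₁` nonvanishing and `|m₁|² − |m₂|² = 1 − |q₁|²` on `Ω`,
then `m₁` and `m₂` are both constant. -/
theorem constant_dilatation_case {Ω : Set ℂ} (hΩo : IsOpen Ω) (hΩc : IsConnected Ω)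
    (q₁ m₁ m₂ : ℂ → ℂ)
    (hq₁ : DifferentiableOn ℂ q₁ Ω)
    (hm₁ : DifferentiableOn ℂ m₁ Ω) (hm₂ : DifferentiableOn ℂ m₂ Ω)
    (hq₁bnd : ∀ z ∈ Ω, 0 < ‖q₁ z‖ ∧ ‖q₁ z‖ < 1)
    (hm₁ne : ∀ z ∈ Ω, m₁ z ≠ 0)
    (hrel : ∀ z ∈ Ω, ‖m₁ z‖ ^ 2 - ‖m₂ z‖ ^ 2
      = 1 - ‖q₁ z‖ ^ 2)
    (c₀ : ℂ) (hc₀ : c₀ ≠ 0) (hqconst : ∀ z ∈ Ω, q₁ z = c₀) :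
    (∃ a : ℂ, ∀ z ∈ Ω, m₁ z = a) ∧ (∃ b : ℂ, ∀ z ∈ Ω, m₂ z = b) := by
  have habs : ∀ w : ℂ, (starRingEnd ℂ) w * w = ((‖w‖ ^ 2 : ℝ) : ℂ) := by
    intro w
    rw [mul_comm, Complex.mul_conj, Complex.normSq_eq_norm_sq]
  have hrelC : ∀ w ∈ Ω, (starRingEnd ℂ) (m₁ w) * m₁ w - (starRingEnd ℂ) (m₂ w) * m₂ w
      = (((1 : ℝ) - ‖c₀‖ ^ 2 : ℝ) : ℂ) := by
    intro w hw
    have h := hrel w hw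
    rw [hqconst w hw] at h
    rw [habs, habs, ← Complex.ofReal_sub, h]
  have stepA : ∀ z ∈ Ω, (starRingEnd ℂ) (m₁ z) * deriv m₁ z
      - (starRingEnd ℂ) (m₂ z) * deriv m₂ z = 0 := by
    intro z hz
    exact (key_deriv hΩo m₁ m₁ m₂ m₂ _ hm₁ hm₁ hm₂ hm₂ hrelC hz).1
  have hd₁ : DifferentiableOn ℂ (deriv m₁) Ω :=
    ((hm₁.analyticOnNhd hΩo).deriv).differentiableOn
  have hd₂ : DifferentiableOn ℂ (deriv m₂) Ω :=
    ((hm₂.analyticOnNhd hΩo).deriv).differentiableOn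
  have stepB : ∀ z ∈ Ω, deriv m₁ z * (starRingEnd ℂ) (deriv m₁ z)
      - deriv m₂ z * (starRingEnd ℂ) (deriv m₂ z) = 0 := by
    intro z hz
    exact (key_deriv hΩo m₁ (deriv m₁) m₂ (deriv m₂) 0 hm₁ hd₁ hm₂ hd₂
      (fun w hw => by rw [stepA w hw]) hz).2
  -- derivatives vanish
  have hzero : ∀ z ∈ Ω, deriv m₁ z = 0 ∧ deriv m₂ z = 0 := by
    intro z hz
    have hB := stepB z hz
    rw [Complex.mul_conj, Complex.mul_conj, sub_eq_zero] at hB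
    have hnsq : Complex.normSq (deriv m₁ z) = Complex.normSq (deriv m₂ z) :=
      Complex.ofReal_inj.mp hB
    have habsd : ‖deriv m₁ z‖ = ‖deriv m₂ z‖ := by
      rw [Complex.norm_def, Complex.norm_def, hnsq]
    have hA := stepA z hz
    rw [sub_eq_zero] at hA
    have hAabs := congrArg norm hA
    simp only [norm_mul, Complex.norm_conj] at hAabs
    have hrelz := hrel z hz
    rw [hqconst z hz] at hrelz
    have hc₀lt : ‖c₀‖ < 1 := by
      have := (hq₁bnd z hz).2; rwa [hqconst z hz] at this
    have hgt : ‖m₂ z‖ < ‖m₁ z‖ := by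
      nlinarith [norm_nonneg (m₁ z), norm_nonneg (m₂ z),
        norm_nonneg c₀]
    have hd1 : ‖deriv m₁ z‖ = 0 := by
      by_contra hne
      have hpos : 0 < ‖deriv m₁ z‖ :=
        lt_of_le_of_ne (norm_nonneg _) (Ne.symm hne)
      rw [← habsd] at hAabs
      have : ‖m₁ z‖ = ‖m₂ z‖ :=
        mul_right_cancel₀ (ne_of_gt hpos) hAabs
      linarith
    constructor
    · exact norm_eq_zero.mp hd1
    · exact norm_eq_zero.mp (by rw [← habsd]; exact hd1)
  exact ⟨const_of_deriv_eq_zero hΩo hΩc m₁ hm₁ (fun z hz => (hzero z hz).1),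
    const_of_deriv_eq_zero hΩo hΩc m₂ hm₂ (fun z hz => (hzero z hz).2)⟩
end
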